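/- arXiv:1510.07366 — 2 statements merged into one kernel-verified Lean document; each statement's English description precedes it below -/
import Mathlib

section
/- (Key estimate for the generalized operators of Section 4) Let n ≥ 1 be a natural number, 0 < q < p ≤ 1, γ ≥ 0, c_n > 0, and for 0 ≤ k ≤ n put b_{n,k} = c_n − p^{n−k+1}[k]_{p,q}, assuming b_{n,k} > 0 for all k. Define L_n^{(p,q),γ}(f;x) = (pq/ℓ_n^{p,q}(x)) Σ_{k=0}^{n} f( (p^{n−k+1}[k]_{p,q} + γ)/b_{n,k} ) p^{(n−k)(n−k−1)/2} q^{k(k−1)/2} [n choose k]_{p,q} x^k. Then for every 0 < α ≤ 1, M > 0, every f ∈ W̃_{α,[0,∞)} with constant M and every x ≥ 0, | L_n^{(p,q),γ}(f;x) − L_n^{p,q}(f;x) | ≤ M·( γ/(c_n + γ) )^α + M·| 1 − [n+1]_{p,q}/(c_n + γ) |^α · L_n^{p,q}( (t/(1+t))^α; x ). -/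
open Finset Filter
open scoped Classical

noncomputable section

/-- The `(p,q)`-integer `[n]_{p,q} = (p^n - q^n)/(p - q)`. -/
def pqInt (p q : ℝ) (n : ℕ) : ℝ := (p ^ n - q ^ n) / (p - q)

/-- The `(p,q)`-factorial. -/
def pqFact (p q : ℝ) : ℕ → ℝ
  | 0 => 1
  | n + 1 => pqFact p q n * pqInt p q (n + 1)

/-- The `(p,q)`-binomial coefficient. -/
def pqBinom (p q : ℝ) (n k : ℕ) : ℝ :=
  pqFact p q n / (pqFact p q k * pqFact p q (n - k))

/-- `ℓ_n^{p,q}(x) = ∏_{s=0}^{n-1} (p^s + q^s x)`. -/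
def pqEll (p q : ℝ) (n : ℕ) (x : ℝ) : ℝ :=
  ∏ s ∈ Finset.range n, (p ^ s + q ^ s * x)

/-- The node `p^{n-k+1}[k]_{p,q} / ([n-k+1]_{p,q} q^k)`. -/
def pqNode (p q : ℝ) (n k : ℕ) : ℝ :=
  p ^ (n - k + 1) * pqInt p q k / (pqInt p q (n - k + 1) * q ^ k)

/-- The `(p,q)`-Bleimann–Butzer–Hahn operator. -/
def bbh (p q : ℝ) (n : ℕ) (f : ℝ → ℝ) (x : ℝ) : ℝ :=
  (p * q / pqEll p q n x) *
    ∑ k ∈ Finset.range (n + 1),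
      f (pqNode p q n k) * p ^ ((n - k) * (n - k - 1) / 2) *
        q ^ (k * (k - 1) / 2) * pqBinom p q n k * x ^ k

/-- `δ_n(x)` from Theorem 3.1. -/
def pqDelta (p q : ℝ) (n : ℕ) (x : ℝ) : ℝ :=
  (x / (1 + x)) ^ 2 *
      (p ^ 2 * q ^ 3 * pqInt p q n * pqInt p q (n - 1) / (pqInt p q (n + 1)) ^ 2 *
          ((1 + x) / (p + q * x)) -
        2 * p * q * pqInt p q n / pqInt p q (n + 1) + 1) +
    p ^ (n + 2) * q * pqInt p q n / (pqInt p q (n + 1)) ^ 2 * (x / (1 + x))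

/-- Statistical convergence of a real sequence. -/
def StatConv (a : ℕ → ℝ) (l : ℝ) : Prop :=
  ∀ ε > (0 : ℝ), Tendsto (fun n : ℕ =>
    (((Finset.range (n + 1)).filter (fun k => ε ≤ |a k - l|)).card : ℝ) / n)
    atTop (nhds 0)

/-- A modulus of continuity. -/
def IsModulus (ω : ℝ → ℝ) : Prop :=
  (∀ δ, 0 ≤ δ → 0 ≤ ω δ) ∧
  (∀ δ₁ δ₂, 0 ≤ δ₁ → δ₁ ≤ δ₂ → ω δ₁ ≤ ω δ₂) ∧
  (∀ δ₁ δ₂, 0 ≤ δ₁ → 0 ≤ δ₂ → ω (δ₁ + δ₂) ≤ ω δ₁ + ω δ₂) ∧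
  Tendsto ω (nhdsWithin 0 (Set.Ioi 0)) (nhds 0)

/-- Membership in the class `H_ω`. -/
def MemHomega (ω f : ℝ → ℝ) : Prop :=
  ∀ x y : ℝ, 0 ≤ x → 0 ≤ y → |f x - f y| ≤ ω |x / (1 + x) - y / (1 + y)|

/-- The modulus `ω̃(f; δ)`. -/
def omegaTilde (f : ℝ → ℝ) (δ : ℝ) : ℝ :=
  sSup {d | ∃ t x : ℝ, 0 ≤ t ∧ 0 ≤ x ∧ |t / (1 + t) - x / (1 + x)| ≤ δ ∧ d = |f t - f x|}

/-- The bivariate `(p,q)`-Bleimann–Butzer–Hahn operator. -/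
def bbh2 (p₁ p₂ q₁ q₂ : ℝ) (n₁ n₂ : ℕ) (f : ℝ → ℝ → ℝ) (x y : ℝ) : ℝ :=
  (p₁ * p₂ * q₁ * q₂ / (pqEll p₁ q₁ n₁ x * pqEll p₂ q₂ n₂ y)) *
    ∑ k₁ ∈ Finset.range (n₁ + 1), ∑ k₂ ∈ Finset.range (n₂ + 1),
      f (pqNode p₁ q₁ n₁ k₁) (pqNode p₂ q₂ n₂ k₂) *
        p₁ ^ ((n₁ - k₁) * (n₁ - k₁ - 1) / 2) * q₁ ^ (k₁ * (k₁ - 1) / 2) *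
        p₂ ^ ((n₂ - k₂) * (n₂ - k₂ - 1) / 2) * q₂ ^ (k₂ * (k₂ - 1) / 2) *
        pqBinom p₁ q₁ n₁ k₁ * pqBinom p₂ q₂ n₂ k₂ * x ^ k₁ * y ^ k₂

/-- Statistical convergence of a double real sequence (Pringsheim sense). -/
def StatConv2 (a : ℕ → ℕ → ℝ) (l : ℝ) : Prop :=
  ∀ ε > (0 : ℝ), Tendsto (fun N : ℕ × ℕ =>
    ((((Finset.range (N.1 + 1)) ×ˢ (Finset.range (N.2 + 1))).filter
        (fun jk => ε ≤ |a jk.1 jk.2 - l|)).card : ℝ) / (N.1 * N.2))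
    atTop (nhds 0)

/-- A bivariate modulus of continuity. -/
def IsModulus2 (ω : ℝ → ℝ → ℝ) : Prop :=
  (∀ a b, 0 ≤ a → 0 ≤ b → 0 ≤ ω a b) ∧
  (∀ a a' b, 0 ≤ a → a ≤ a' → 0 ≤ b → ω a b ≤ ω a' b) ∧
  (∀ a b b', 0 ≤ a → 0 ≤ b → b ≤ b' → ω a b ≤ ω a b') ∧
  (∀ a a' b, 0 ≤ a → 0 ≤ a' → 0 ≤ b → ω (a + a') b ≤ ω a b + ω a' b) ∧
  (∀ a b b', 0 ≤ a → 0 ≤ b → 0 ≤ b' → ω a (b + b') ≤ ω a b + ω a b') ∧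
  Tendsto (fun d : ℝ × ℝ => ω d.1 d.2)
    (nhdsWithin (0, 0) (Set.Ioi 0 ×ˢ Set.Ioi 0)) (nhds 0)

/-- Membership in the class `H_{ω₂}`. -/
def MemHomega2 (ω g : ℝ → ℝ → ℝ) : Prop :=
  ∀ u₁ v₁ u₂ v₂ : ℝ, 0 ≤ u₁ → 0 ≤ v₁ → 0 ≤ u₂ → 0 ≤ v₂ →
    |g u₁ v₁ - g u₂ v₂| ≤
      ω |u₁ / (1 + u₁) - u₂ / (1 + u₂)| |v₁ / (1 + v₁) - v₂ / (1 + v₂)|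

/-- The bivariate modulus `ω̃(g; δ₁, δ₂)`. -/
def omegaTilde2 (g : ℝ → ℝ → ℝ) (δ₁ δ₂ : ℝ) : ℝ :=
  sSup {d | ∃ t s x y : ℝ, 0 ≤ t ∧ 0 ≤ s ∧ 0 ≤ x ∧ 0 ≤ y ∧
    |t / (1 + t) - x / (1 + x)| ≤ δ₁ ∧ |s / (1 + s) - y / (1 + y)| ≤ δ₂ ∧
    d = |g t s - g x y|}

section aux
variable {p q : ℝ} (hq : 0 < q) (hqp : q < p)
include hq hqp

lemma pqInt_pos {n : ℕ} (hn : 1 ≤ n) : 0 < pqInt p q n := by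
  have : q ^ n < p ^ n := pow_lt_pow_left₀ hqp hq.le (by omega)
  exact div_pos (by linarith) (by linarith)

lemma pqInt_nonneg (n : ℕ) : 0 ≤ pqInt p q n := by
  cases n with
  | zero => simp [pqInt]
  | succ m => exact (pqInt_pos hq hqp (by omega)).le

lemma pqFact_pos (n : ℕ) : 0 < pqFact p q n := by
  induction n with
  | zero => norm_num [pqFact]
  | succ m ih => exact mul_pos ih (pqInt_pos hq hqp (by omega))

lemma pqBinom_pos (n k : ℕ) : 0 < pqBinom p q n k :=
  div_pos (pqFact_pos hq hqp n) (mul_pos (pqFact_pos hq hqp k) (pqFact_pos hq hqp _))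

lemma pqInt_add (a b : ℕ) :
    pqInt p q (a + b) = p ^ a * pqInt p q b + q ^ b * pqInt p q a := by
  have hpq : p - q ≠ 0 := by linarith
  unfold pqInt
  field_simp
  ring_nf

lemma pqBinom_zero (n : ℕ) : pqBinom p q n 0 = 1 := by
  have := pqFact_pos (p := p) (q := q) hq hqp n
  simp [pqBinom, pqFact]
  exact this.ne'

lemma pqBinom_self (n : ℕ) : pqBinom p q n n = 1 := by
  have := pqFact_pos (p := p) (q := q) hq hqp n
  simp [pqBinom, pqFact]
  exact this.ne'

lemma pq_pascal (a b : ℕ) :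
    pqBinom p q (a + b + 2) (a + 1) =
      p ^ (a + 1) * pqBinom p q (a + b + 1) (a + 1) +
        q ^ (b + 1) * pqBinom p q (a + b + 1) a := by
  have h1 : a + b + 2 - (a + 1) = b + 1 := by omega
  have h2 : a + b + 1 - (a + 1) = b := by omega
  have h3 : a + b + 1 - a = b + 1 := by omega
  have key : pqInt p q (a + b + 2) =
      p ^ (a + 1) * pqInt p q (b + 1) + q ^ (b + 1) * pqInt p q (a + 1) := by
    have := pqInt_add (p := p) (q := q) hq hqp (a + 1) (b + 1)
    convert this using 2 <;> omega
  unfold pqBinom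
  rw [h1, h2, h3]
  have e1 : pqFact p q (a + b + 2) = pqFact p q (a + b + 1) * pqInt p q (a + b + 2) := rfl
  have e2 : pqFact p q (a + 1) = pqFact p q a * pqInt p q (a + 1) := rfl
  have e3 : pqFact p q (b + 1) = pqFact p q b * pqInt p q (b + 1) := rfl
  have pa := pqFact_pos (p := p) (q := q) hq hqp a
  have pb := pqFact_pos (p := p) (q := q) hq hqp b
  have pab := pqFact_pos (p := p) (q := q) hq hqp (a + b + 1)
  have ia := pqInt_pos (p := p) (q := q) hq hqp (n := a + 1) (by omega)
  have ib := pqInt_pos (p := p) (q := q) hq hqp (n := b + 1) (by omega)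
  rw [e1, e2, e3, key]
  field_simp

lemma pq_binom_theorem (n : ℕ) (x : ℝ) :
    ∑ k ∈ Finset.range (n + 1),
      p ^ ((n - k) * (n - k - 1) / 2) * q ^ (k * (k - 1) / 2) * pqBinom p q n k * x ^ k
      = pqEll p q n x := by
  induction n with
  | zero => simp [pqEll, pqBinom_zero hq hqp]
  | succ n ih =>
    rw [pqEll, Finset.prod_range_succ, ← pqEll, ← ih]
    rw [Finset.sum_range_succ' (fun k =>
      p ^ ((n + 1 - k) * (n + 1 - k - 1) / 2) * q ^ (k * (k - 1) / 2) *
        pqBinom p q (n + 1) k * x ^ k)]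
    rw [Finset.sum_range_succ (fun k =>
      p ^ ((n + 1 - (k+1)) * (n + 1 - (k+1) - 1) / 2) * q ^ ((k+1) * ((k+1) - 1) / 2) *
        pqBinom p q (n + 1) (k+1) * x ^ (k+1))]
    have hsplit : ∀ k ∈ Finset.range n,
        p ^ ((n + 1 - (k+1)) * (n + 1 - (k+1) - 1) / 2) * q ^ ((k+1) * ((k+1) - 1) / 2) *
          pqBinom p q (n + 1) (k+1) * x ^ (k+1)
        = p ^ n * (p ^ ((n - (k+1)) * (n - (k+1) - 1) / 2) * q ^ ((k+1) * ((k+1) - 1) / 2) *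
            pqBinom p q n (k+1) * x ^ (k+1))
          + q ^ n * (p ^ ((n - k) * (n - k - 1) / 2) * q ^ (k * (k - 1) / 2) *
            pqBinom p q n k * x ^ k) * x := by
      intro k hk
      rw [Finset.mem_range] at hk
      obtain ⟨b, hb⟩ : ∃ b, n = k + b + 1 := ⟨n - k - 1, by omega⟩
      subst hb
      have hpas := pq_pascal (p := p) (q := q) hq hqp k b
      have h1 : k + b + 1 + 1 - (k + 1) = b + 1 := by omega
      have h2 : k + b + 1 - (k + 1) = b := by omega
      have h3 : k + b + 1 - k = b + 1 := by omega
      rw [h1, h2, h3, hpas]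
      have t1 : (b + 1) * (b + 1 - 1) / 2 = b * (b - 1) / 2 + b := Nat.triangle_succ b
      have t2 : (k + 1) * (k + 1 - 1) / 2 = k * (k - 1) / 2 + k := Nat.triangle_succ k
      rw [t1, t2]
      rw [pow_add, pow_add, pow_add, pow_add, pow_succ]
      ring
    rw [Finset.sum_congr rfl hsplit, Finset.sum_add_distrib]
    have hb0 : pqBinom p q (n + 1) 0 = 1 := pqBinom_zero hq hqp _
    have hbn : pqBinom p q (n + 1) (n + 1) = 1 := pqBinom_self hq hqp _
    have hbn' : pqBinom p q n n = 1 := pqBinom_self hq hqp _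
    have hbz : pqBinom p q n 0 = 1 := pqBinom_zero hq hqp _
    set S := ∑ k ∈ Finset.range (n + 1),
      p ^ ((n - k) * (n - k - 1) / 2) * q ^ (k * (k - 1) / 2) * pqBinom p q n k * x ^ k with hS
    have e1 : ∑ k ∈ Finset.range n, p ^ n *
        (p ^ ((n - (k+1)) * (n - (k+1) - 1) / 2) * q ^ ((k+1) * ((k+1) - 1) / 2) *
          pqBinom p q n (k+1) * x ^ (k+1))
        = p ^ n * (S - p ^ ((n - 0) * (n - 0 - 1) / 2) * q ^ (0 * (0 - 1) / 2) *
            pqBinom p q n 0 * x ^ 0) := by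
      rw [← Finset.mul_sum]
      congr 1
      have h := Finset.sum_range_succ' (fun k =>
        p ^ ((n - k) * (n - k - 1) / 2) * q ^ (k * (k - 1) / 2) * pqBinom p q n k * x ^ k) n
      rw [hS, h]
      ring
    have e2 : ∑ k ∈ Finset.range n, q ^ n *
        (p ^ ((n - k) * (n - k - 1) / 2) * q ^ (k * (k - 1) / 2) *
          pqBinom p q n k * x ^ k) * x
        = q ^ n * (S - p ^ ((n - n) * (n - n - 1) / 2) * q ^ (n * (n - 1) / 2) *
            pqBinom p q n n * x ^ n) * x := by
      have h := Finset.sum_range_succ (fun k =>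
        p ^ ((n - k) * (n - k - 1) / 2) * q ^ (k * (k - 1) / 2) * pqBinom p q n k * x ^ k) n
      rw [← Finset.sum_mul, ← Finset.mul_sum]
      rw [hS, h]
      ring
    rw [e1, e2, hb0, hbn, hbn', hbz]
    have t3 : (n + 1) * n / 2 = n * (n - 1) / 2 + n := by
      have := Nat.triangle_succ n; simpa using this
    simp only [Nat.sub_self, Nat.sub_zero, Nat.zero_mul, Nat.zero_div, Nat.add_sub_cancel, t3]
    rw [pow_add, pow_add]
    ring
end aux

lemma rpow_subadd {u v α : ℝ} (hu : 0 ≤ u) (hv : 0 ≤ v) (h0 : 0 ≤ α) (h1 : α ≤ 1) :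
    (u + v) ^ α ≤ u ^ α + v ^ α := by
  lift u to NNReal using hu
  lift v to NNReal using hv
  have h := NNReal.rpow_add_le_add_rpow u v h0 h1
  rw [← NNReal.coe_add, ← NNReal.coe_rpow, ← NNReal.coe_rpow, ← NNReal.coe_rpow]
  exact_mod_cast h


/-- key estimate for the generalized operators of Section 4. -/
theorem bbh_generalized_estimate (n : ℕ) (hn : 1 ≤ n) (p q : ℝ)
    (hq : 0 < q) (hqp : q < p) (hp : p ≤ 1)
    (γ : ℝ) (hγ : 0 ≤ γ) (c : ℝ) (hc : 0 < c)
    (hb : ∀ k ≤ n, 0 < c - p ^ (n - k + 1) * pqInt p q k)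
    (α : ℝ) (hα0 : 0 < α) (hα1 : α ≤ 1) (M : ℝ) (hM : 0 < M)
    (f : ℝ → ℝ)
    (hfb : ∃ C : ℝ, ∀ t : ℝ, 0 ≤ t → |f t| ≤ C)
    (hfc : ContinuousOn f (Set.Ici 0))
    (hf : ∀ t : ℝ, 0 ≤ t → ∀ y : ℝ, 0 ≤ y →
      |f t - f y| ≤ M * |t / (1 + t) - y / (1 + y)| ^ α)
    (x : ℝ) (hx : 0 ≤ x) :
    |(p * q / pqEll p q n x) *
          (∑ k ∈ Finset.range (n + 1),
            f ((p ^ (n - k + 1) * pqInt p q k + γ) /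
                (c - p ^ (n - k + 1) * pqInt p q k)) *
              p ^ ((n - k) * (n - k - 1) / 2) * q ^ (k * (k - 1) / 2) *
              pqBinom p q n k * x ^ k) -
        bbh p q n f x| ≤
      M * (γ / (c + γ)) ^ α +
        M * |1 - pqInt p q (n + 1) / (c + γ)| ^ α *
          bbh p q n (fun t => (t / (1 + t)) ^ α) x := by
  have hp0 : 0 < p := lt_trans hq hqp
  have hℓ : 0 < pqEll p q n x :=
    Finset.prod_pos fun s _ => by positivity
  have hcγ : 0 < c + γ := by linarith
  have hN : 0 < pqInt p q (n + 1) := pqInt_pos hq hqp (by omega)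
  set A := (γ / (c + γ)) ^ α with hA
  set B := |1 - pqInt p q (n + 1) / (c + γ)| ^ α with hB
  have hA0 : 0 ≤ A := Real.rpow_nonneg (div_nonneg hγ hcγ.le) α
  have hB0 : 0 ≤ B := Real.rpow_nonneg (abs_nonneg _) α
  set g : ℝ → ℝ := fun t => (t / (1 + t)) ^ α with hg
  set w : ℕ → ℝ := fun k =>
    p ^ ((n - k) * (n - k - 1) / 2) * q ^ (k * (k - 1) / 2) * pqBinom p q n k * x ^ k with hw
  have hw0 : ∀ k, 0 ≤ w k := fun k => by
    have hpb := pqBinom_pos (p := p) (q := q) hq hqp n k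
    simp only [hw]
    positivity
  have hsumw : ∑ k ∈ Finset.range (n + 1), w k = pqEll p q n x := pq_binom_theorem hq hqp n x
  have key : ∀ k ∈ Finset.range (n + 1),
      |f ((p ^ (n - k + 1) * pqInt p q k + γ) / (c - p ^ (n - k + 1) * pqInt p q k))
        - f (pqNode p q n k)| ≤ M * A + M * B * g (pqNode p q n k) := by
    intro k hk
    rw [Finset.mem_range] at hk
    have hkn : k ≤ n := by omega
    set a := p ^ (n - k + 1) * pqInt p q k with ha
    have ha0 : 0 ≤ a := mul_nonneg (by positivity) (pqInt_nonneg hq hqp k)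
    have hbk : 0 < c - a := hb k hkn
    set D := pqInt p q (n - k + 1) * q ^ k with hD
    have hD0 : 0 < D := mul_pos (pqInt_pos hq hqp (by omega)) (by positivity)
    have hnode : pqNode p q n k = a / D := by unfold pqNode; rw [ha, hD]
    have hNsum : pqInt p q (n + 1) = a + q ^ k * pqInt p q (n - k + 1) := by
      have h := pqInt_add (p := p) (q := q) hq hqp (n - k + 1) k
      have hnk : n - k + 1 + k = n + 1 := by omega
      rw [hnk] at h
      rw [h, ha]
    have hnode0 : 0 ≤ pqNode p q n k := by
      rw [hnode]; exact div_nonneg ha0 hD0.le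
    have ht'0 : 0 ≤ (a + γ) / (c - a) := div_nonneg (by linarith) hbk.le
    have hbound := hf _ ht'0 _ hnode0
    have hr1 : (a + γ) / (c - a) / (1 + (a + γ) / (c - a)) = (a + γ) / (c + γ) := by
      have hden : (0:ℝ) < 1 + (a + γ) / (c - a) := by linarith
      rw [div_eq_div_iff (ne_of_gt hden) (ne_of_gt hcγ)]
      field_simp
      ring
    have hr2 : pqNode p q n k / (1 + pqNode p q n k) = a / pqInt p q (n + 1) := by
      rw [hnode]
      have hden : (0:ℝ) < 1 + a / D := by
        have : 0 ≤ a / D := div_nonneg ha0 hD0.le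
        linarith
      rw [div_eq_div_iff (ne_of_gt hden) (ne_of_gt hN), hNsum, hD]
      have hI : pqInt p q (n - k + 1) ≠ 0 := (pqInt_pos hq hqp (by omega)).ne'
      field_simp
      ring
    rw [hr1, hr2] at hbound
    have hdiff : (a + γ) / (c + γ) - a / pqInt p q (n + 1)
        = γ / (c + γ) - (a / pqInt p q (n + 1)) * (1 - pqInt p q (n + 1) / (c + γ)) := by
      field_simp
      ring
    have habs : |(a + γ) / (c + γ) - a / pqInt p q (n + 1)|
        ≤ γ / (c + γ) + (a / pqInt p q (n + 1)) * |1 - pqInt p q (n + 1) / (c + γ)| := by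
      rw [hdiff, sub_eq_add_neg]
      refine (abs_add_le _ _).trans ?_
      rw [abs_neg, abs_of_nonneg (div_nonneg hγ hcγ.le), abs_mul,
        abs_of_nonneg (div_nonneg ha0 hN.le)]
    have h1 : |(a + γ) / (c + γ) - a / pqInt p q (n + 1)| ^ α
        ≤ (γ / (c + γ)) ^ α + ((a / pqInt p q (n + 1)) * |1 - pqInt p q (n + 1) / (c + γ)|) ^ α := by
      refine le_trans (Real.rpow_le_rpow (abs_nonneg _) habs hα0.le) ?_
      exact rpow_subadd (div_nonneg hγ hcγ.le)
        (mul_nonneg (div_nonneg ha0 hN.le) (abs_nonneg _)) hα0.le hα1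
    have h2 : ((a / pqInt p q (n + 1)) * |1 - pqInt p q (n + 1) / (c + γ)|) ^ α
        = (a / pqInt p q (n + 1)) ^ α * B := by
      rw [Real.mul_rpow (div_nonneg ha0 hN.le) (abs_nonneg _), hB]
    have h3 : g (pqNode p q n k) = (a / pqInt p q (n + 1)) ^ α := by
      simp only [hg]
      rw [hr2]
    calc |f ((a + γ) / (c - a)) - f (pqNode p q n k)|
        ≤ M * |(a + γ) / (c + γ) - a / pqInt p q (n + 1)| ^ α := hbound
      _ ≤ M * ((γ / (c + γ)) ^ α + (a / pqInt p q (n + 1)) ^ α * B) := by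
          rw [← h2]
          exact mul_le_mul_of_nonneg_left h1 hM.le
      _ = M * A + M * B * g (pqNode p q n k) := by rw [h3, hA]; ring
  set t' : ℕ → ℝ := fun k =>
    (p ^ (n - k + 1) * pqInt p q k + γ) / (c - p ^ (n - k + 1) * pqInt p q k) with ht'
  have e1 : (p * q / pqEll p q n x) *
        (∑ k ∈ Finset.range (n + 1),
          f (t' k) * p ^ ((n - k) * (n - k - 1) / 2) * q ^ (k * (k - 1) / 2) *
            pqBinom p q n k * x ^ k) -
      bbh p q n f x
      = (p * q / pqEll p q n x) *
          ∑ k ∈ Finset.range (n + 1), (f (t' k) - f (pqNode p q n k)) * w k := by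
    unfold bbh
    rw [← mul_sub, ← Finset.sum_sub_distrib]
    congr 1
    refine Finset.sum_congr rfl fun k _ => ?_
    simp only [hw]
    ring
  rw [e1, abs_mul, abs_of_nonneg (div_nonneg (by positivity) hℓ.le)]
  have step1 : |∑ k ∈ Finset.range (n + 1), (f (t' k) - f (pqNode p q n k)) * w k|
      ≤ ∑ k ∈ Finset.range (n + 1), (M * A + M * B * g (pqNode p q n k)) * w k := by
    refine (Finset.abs_sum_le_sum_abs _ _).trans (Finset.sum_le_sum fun k hk => ?_)
    rw [abs_mul, abs_of_nonneg (hw0 k)]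
    exact mul_le_mul_of_nonneg_right (key k hk) (hw0 k)
  have e2 : ∑ k ∈ Finset.range (n + 1), (M * A + M * B * g (pqNode p q n k)) * w k
      = M * A * pqEll p q n x
        + M * B * ∑ k ∈ Finset.range (n + 1), g (pqNode p q n k) * w k := by
    rw [← hsumw, Finset.mul_sum, Finset.mul_sum, ← Finset.sum_add_distrib]
    exact Finset.sum_congr rfl fun k _ => by ring
  have e3 : bbh p q n g x
      = (p * q / pqEll p q n x) * ∑ k ∈ Finset.range (n + 1), g (pqNode p q n k) * w k := by
    unfold bbh
    congr 1
    exact Finset.sum_congr rfl fun k _ => by simp only [hw]; ring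
  calc (p * q / pqEll p q n x) *
        |∑ k ∈ Finset.range (n + 1), (f (t' k) - f (pqNode p q n k)) * w k|
      ≤ (p * q / pqEll p q n x) *
          ∑ k ∈ Finset.range (n + 1), (M * A + M * B * g (pqNode p q n k)) * w k :=
        mul_le_mul_of_nonneg_left step1 (div_nonneg (by positivity) hℓ.le)
    _ = M * A * (p * q) + M * B * bbh p q n g x := by
        rw [e2, e3]
        field_simp
    _ ≤ M * A + M * B * bbh p q n g x := by
        have hpq1 : p * q ≤ 1 := by nlinarith
        have : M * A * (p * q) ≤ M * A * 1 :=
          mul_le_mul_of_nonneg_left hpq1 (by positivity)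
        linarith
end
end

section
/- (Theorem 5.5, bivariate Lipschitz-type estimate) Let n₁, n₂ ≥ 1 be natural numbers, 0 < q_i < p_i ≤ 1 (i = 1,2), 0 < α₁, α₂ ≤ 1, M > 0, and let E be a nonempty closed subset of [0,∞). Let f be a bounded continuous function on [0,∞)² satisfying |f(t,s) − f(x₁,y₁)| ≤ M·|t/(1+t) − x₁/(1+x₁)|^{α₁}·|s/(1+s) − y₁/(1+y₁)|^{α₂} for all t,s ≥ 0 and all (x₁,y₁) ∈ E×E. With Δ_{n₁}(x) = (1/(p₁q₁))·L_{n₁}^{p₁,q₁}((t/(1+t) − x/(1+x))²; x) and Δ_{n₂}(y) = (1/(p₂q₂))·L_{n₂}^{p₂,q₂}((s/(1+s) − y/(1+y))²; y), one has for all x, y ≥ 0: | L_{n₁,n₂}(f; p₁,p₂;q₁,q₂; x,y) − p₁q₁p₂q₂·f(x,y) | ≤ M·( Δ_{n₁}(x)^{α₁/2}·Δ_{n₂}(y)^{α₂/2} + Δ_{n₁}(x)^{α₁/2}·d(y,E)^{α₂} + Δ_{n₂}(y)^{α₂/2}·d(x,E)^{α₁} + 2·d(x,E)^{α₁}·d(y,E)^{α₂}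 ), where d(x,E) = inf{|x − z| : z ∈ E}. -/
open Finset Filter
open scoped Classical

noncomputable section

namespace PQAux

open Finset

variable {p q x : ℝ}

lemma pqInt_pos (hq : 0 < q) (hqp : q < p) {n : ℕ} (hn : n ≠ 0) : 0 < pqInt p q n := by
  have h1 : q ^ n < p ^ n := pow_lt_pow_left₀ hqp hq.le hn
  exact div_pos (sub_pos.mpr h1) (sub_pos.mpr hqp)

lemma pqInt_nonneg (hq : 0 < q) (hqp : q < p) (n : ℕ) : 0 ≤ pqInt p q n := by
  rcases Nat.eq_zero_or_pos n with h | h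
  · simp [h, pqInt]
  · exact (pqInt_pos hq hqp h.ne').le

lemma pqFact_pos (hq : 0 < q) (hqp : q < p) (n : ℕ) : 0 < pqFact p q n := by
  induction n with
  | zero => norm_num [pqFact]
  | succ n ih => exact mul_pos ih (pqInt_pos hq hqp n.succ_ne_zero)

lemma pqBinom_pos (hq : 0 < q) (hqp : q < p) (n k : ℕ) : 0 < pqBinom p q n k :=
  div_pos (pqFact_pos hq hqp n) (mul_pos (pqFact_pos hq hqp k) (pqFact_pos hq hqp (n - k)))

lemma pqInt_add (hqp : q < p) (a b : ℕ) :
    pqInt p q (a + b) = p ^ a * pqInt p q b + q ^ b * pqInt p q a := by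
  have h : p - q ≠ 0 := sub_ne_zero.mpr hqp.ne'
  unfold pqInt
  field_simp [pqInt, pow_add]
  ring

lemma pqBinom_zero (hq : 0 < q) (hqp : q < p) (n : ℕ) : pqBinom p q n 0 = 1 := by
  simp [pqBinom, pqFact, (pqFact_pos hq hqp n).ne']

lemma pqBinom_self (hq : 0 < q) (hqp : q < p) (n : ℕ) : pqBinom p q n n = 1 := by
  simp [pqBinom, pqFact, (pqFact_pos hq hqp n).ne']

lemma pqBinom_pascal (hq : 0 < q) (hqp : q < p) {n k : ℕ} (hk : k < n) :
    pqBinom p q (n + 1) (k + 1)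
      = p ^ (k + 1) * pqBinom p q n (k + 1) + q ^ (n - k) * pqBinom p q n k := by
  obtain ⟨a, ha⟩ : ∃ a, n - k = a + 1 := ⟨n - (k + 1), by omega⟩
  have hnk : n - (k + 1) = a := by omega
  have hint : pqInt p q (n + 1)
      = p ^ (k + 1) * pqInt p q (a + 1) + q ^ (a + 1) * pqInt p q (k + 1) := by
    have h := pqInt_add hqp (k + 1) (a + 1)
    rw [show k + 1 + (a + 1) = n + 1 by omega] at h
    exact h
  rw [pqBinom, pqBinom, pqBinom, show n + 1 - (k + 1) = a + 1 by omega, ha, hnk]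
  simp only [pqFact]
  rw [hint]
  have h1 := (pqFact_pos hq hqp k).ne'
  have h2 := (pqFact_pos hq hqp a).ne'
  have h3 := (pqInt_pos hq hqp (Nat.succ_ne_zero k)).ne'
  have h4 := (pqInt_pos hq hqp (Nat.succ_ne_zero a)).ne'
  field_simp

/-- triangle-number identity -/
lemma tri (m : ℕ) : (m + 1) * m / 2 = m + m * (m - 1) / 2 := by
  calc (m + 1) * m / 2 = (m + 1).choose 2 := by
        rw [Nat.choose_two_right, Nat.add_sub_cancel]
    _ = m.choose 1 + m.choose 2 := Nat.choose_succ_succ m 1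
    _ = m + m * (m - 1) / 2 := by rw [Nat.choose_one_right, Nat.choose_two_right]

/-- weights -/
def pqW (p q : ℝ) (n k : ℕ) : ℝ :=
  p ^ ((n - k) * (n - k - 1) / 2) * q ^ (k * (k - 1) / 2) * pqBinom p q n k

lemma pqW_pos (hq : 0 < q) (hqp : q < p) (n k : ℕ) : 0 < pqW p q n k := by
  have hp : 0 < p := hq.trans hqp
  exact mul_pos (mul_pos (pow_pos hp _) (pow_pos hq _)) (pqBinom_pos hq hqp n k)

lemma pqW_pascal (hq : 0 < q) (hqp : q < p) {n j : ℕ} (hj : j < n) :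
    pqW p q (n + 1) (j + 1) = p ^ n * pqW p q n (j + 1) + q ^ n * pqW p q n j := by
  obtain ⟨m, rfl⟩ : ∃ m, n = j + 1 + m := ⟨n - (j + 1), by omega⟩
  have hB := pqBinom_pascal hq hqp (show j < j + 1 + m by omega)
  unfold pqW
  rw [hB]
  rw [show j + 1 + m + 1 - (j + 1) = m + 1 by omega,
    show j + 1 + m - (j + 1) = m by omega,
    show j + 1 + m - j = m + 1 by omega]
  simp only [Nat.add_sub_cancel]
  rw [tri m, tri j]
  ring

lemma sum_pqW (hq : 0 < q) (hqp : q < p) (x : ℝ) :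
    ∀ n, ∑ k ∈ Finset.range (n + 1), pqW p q n k * x ^ k = pqEll p q n x := by
  intro n
  induction n with
  | zero => simp [pqW, pqEll, pqBinom, pqFact]
  | succ n ih =>
    have hE : pqEll p q (n + 1) x = pqEll p q n x * (p ^ n + q ^ n * x) := by
      rw [pqEll, pqEll, Finset.prod_range_succ]
    have hW0 : pqW p q (n + 1) 0 = p ^ n * pqW p q n 0 := by
      unfold pqW
      rw [pqBinom_zero hq hqp, pqBinom_zero hq hqp]
      simp only [Nat.sub_zero, Nat.add_sub_cancel]
      rw [tri n]
      ring
    have hWtop : pqW p q (n + 1) (n + 1) = q ^ n * pqW p q n n := by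
      unfold pqW
      rw [pqBinom_self hq hqp, pqBinom_self hq hqp]
      simp only [Nat.sub_self, Nat.add_sub_cancel]
      rw [tri n]
      ring
    rw [hE, ← ih]
    rw [Finset.sum_range_succ' (fun k => pqW p q (n + 1) k * x ^ k) (n + 1)]
    rw [Finset.sum_range_succ (fun i => pqW p q (n + 1) (i + 1) * x ^ (i + 1)) n]
    rw [mul_add, Finset.sum_mul, Finset.sum_mul]
    rw [Finset.sum_range_succ' (fun k => pqW p q n k * x ^ k * p ^ n) n]
    rw [Finset.sum_range_succ (fun k => pqW p q n k * x ^ k * (q ^ n * x)) n]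
    rw [show (∑ i ∈ Finset.range n, pqW p q (n + 1) (i + 1) * x ^ (i + 1))
        = ∑ i ∈ Finset.range n,
            (pqW p q n (i + 1) * x ^ (i + 1) * p ^ n + pqW p q n i * x ^ i * (q ^ n * x)) from
      Finset.sum_congr rfl fun i hi => by
        rw [pqW_pascal hq hqp (Finset.mem_range.mp hi)]; ring]
    rw [Finset.sum_add_distrib, hW0, hWtop]
    ring

lemma pqEll_pos (hp : 0 < p) (hq : 0 < q) (hx : 0 ≤ x) (n : ℕ) : 0 < pqEll p q n x :=
  Finset.prod_pos fun s _ => by positivity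

lemma pqNode_nonneg (hq : 0 < q) (hqp : q < p) (n k : ℕ) : 0 ≤ pqNode p q n k := by
  have hp : 0 < p := hq.trans hqp
  exact div_nonneg (mul_nonneg (pow_pos hp _).le (pqInt_nonneg hq hqp k))
    (mul_nonneg (pqInt_nonneg hq hqp _) (pow_pos hq _).le)

/-- normalized weights -/
def bbhWeight (p q : ℝ) (n : ℕ) (x : ℝ) (k : ℕ) : ℝ :=
  pqW p q n k * x ^ k / pqEll p q n x

lemma bbhWeight_nonneg (hq : 0 < q) (hqp : q < p) (hx : 0 ≤ x) (n k : ℕ) :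
    0 ≤ bbhWeight p q n x k := by
  have hp : 0 < p := hq.trans hqp
  exact div_nonneg (mul_nonneg (pqW_pos hq hqp n k).le (pow_nonneg hx k))
    (pqEll_pos hp hq hx n).le

lemma sum_bbhWeight (hq : 0 < q) (hqp : q < p) (hx : 0 ≤ x) (n : ℕ) :
    ∑ k ∈ Finset.range (n + 1), bbhWeight p q n x k = 1 := by
  have hp : 0 < p := hq.trans hqp
  simp only [bbhWeight]
  rw [← Finset.sum_div, sum_pqW hq hqp, div_self (pqEll_pos hp hq hx n).ne']

lemma bbh_eq (p q : ℝ) (n : ℕ) (g : ℝ → ℝ) (x : ℝ) :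
    bbh p q n g x
      = p * q * ∑ k ∈ Finset.range (n + 1), g (pqNode p q n k) * bbhWeight p q n x k := by
  rw [bbh, Finset.mul_sum, Finset.mul_sum]
  exact Finset.sum_congr rfl fun k _ => by rw [bbhWeight, pqW]; ring

lemma bbh2_eq (p₁ p₂ q₁ q₂ : ℝ) (n₁ n₂ : ℕ) (f : ℝ → ℝ → ℝ) (x y : ℝ) :
    bbh2 p₁ p₂ q₁ q₂ n₁ n₂ f x y
      = (p₁ * q₁ * (p₂ * q₂)) * ∑ k₁ ∈ Finset.range (n₁ + 1), ∑ k₂ ∈ Finset.range (n₂ + 1),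
          f (pqNode p₁ q₁ n₁ k₁) (pqNode p₂ q₂ n₂ k₂) *
            (bbhWeight p₁ q₁ n₁ x k₁ * bbhWeight p₂ q₂ n₂ y k₂) := by
  rw [bbh2, Finset.mul_sum, Finset.mul_sum]
  refine Finset.sum_congr rfl fun k₁ _ => ?_
  rw [Finset.mul_sum, Finset.mul_sum]
  refine Finset.sum_congr rfl fun k₂ _ => ?_
  rw [bbhWeight, bbhWeight, pqW, pqW]; ring

lemma ratio_lip (a b : ℝ) (ha : 0 ≤ a) (hb : 0 ≤ b) :
    |a / (1 + a) - b / (1 + b)| ≤ |a - b| := by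
  have h1 : (0:ℝ) < 1 + a := by linarith
  have h2 : (0:ℝ) < 1 + b := by linarith
  have he : a / (1 + a) - b / (1 + b) = (a - b) / ((1 + a) * (1 + b)) := by
    field_simp; ring
  rw [he, abs_div, abs_of_pos (mul_pos h1 h2)]
  exact div_le_self (abs_nonneg _) (by nlinarith)

lemma rpow_add_le (a b α : ℝ) (ha : 0 ≤ a) (hb : 0 ≤ b) (h0 : 0 ≤ α) (h1 : α ≤ 1) :
    (a + b) ^ α ≤ a ^ α + b ^ α := by
  have h := NNReal.rpow_add_le_add_rpow a.toNNReal b.toNNReal h0 h1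
  rw [← Real.toNNReal_add ha hb] at h
  have h2 := (NNReal.coe_le_coe).mpr h
  rw [NNReal.coe_add] at h2
  simpa [NNReal.coe_rpow, Real.coe_toNNReal _ ha, Real.coe_toNNReal _ hb,
    Real.coe_toNNReal _ (add_nonneg ha hb)] using h2

lemma jensen_rpow {ι : Type*} (t : Finset ι) (b z : ι → ℝ) (α : ℝ)
    (hα0 : 0 < α) (hα1 : α ≤ 1)
    (hb : ∀ i ∈ t, 0 ≤ b i) (hs : ∑ i ∈ t, b i = 1) :
    ∑ i ∈ t, b i * |z i| ^ α ≤ (∑ i ∈ t, b i * (z i) ^ 2) ^ (α / 2) := by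
  have hconc : ConcaveOn ℝ (Set.Ici 0) (fun u : ℝ => u ^ (α / 2)) :=
    Real.concaveOn_rpow (by linarith) (by linarith)
  have h := hconc.le_map_sum hb hs (fun i _ => Set.mem_Ici.mpr (sq_nonneg (z i)))
  simp only [smul_eq_mul] at h
  have he : ∀ i, ((z i) ^ 2 : ℝ) ^ (α / 2) = |z i| ^ α := by
    intro i
    rw [← sq_abs, ← Real.rpow_natCast |z i| 2, ← Real.rpow_mul (abs_nonneg _)]
    congr 1
    push_cast
    ring
  calc ∑ i ∈ t, b i * |z i| ^ α = ∑ i ∈ t, b i * ((z i) ^ 2) ^ (α / 2) :=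
        Finset.sum_congr rfl fun i _ => by rw [he]
    _ ≤ (∑ i ∈ t, b i * (z i) ^ 2) ^ (α / 2) := h

end PQAux
set_option maxHeartbeats 1000000 in
/-- Theorem 5.5, bivariate Lipschitz-type estimate. -/
theorem bbh2_lipschitz_estimate (n₁ n₂ : ℕ) (hn₁ : 1 ≤ n₁) (hn₂ : 1 ≤ n₂)
    (p₁ p₂ q₁ q₂ : ℝ)
    (hq₁ : 0 < q₁) (hqp₁ : q₁ < p₁) (hp₁ : p₁ ≤ 1)
    (hq₂ : 0 < q₂) (hqp₂ : q₂ < p₂) (hp₂ : p₂ ≤ 1)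
    (α₁ α₂ : ℝ) (hα₁0 : 0 < α₁) (hα₁1 : α₁ ≤ 1) (hα₂0 : 0 < α₂) (hα₂1 : α₂ ≤ 1)
    (M : ℝ) (hM : 0 < M)
    (E : Set ℝ) (hE : E ⊆ Set.Ici 0) (hEne : E.Nonempty) (hEcl : IsClosed E)
    (f : ℝ → ℝ → ℝ)
    (hfb : ∃ C : ℝ, ∀ t s : ℝ, 0 ≤ t → 0 ≤ s → |f t s| ≤ C)
    (hfc : ContinuousOn (fun ts : ℝ × ℝ => f ts.1 ts.2) (Set.Ici 0 ×ˢ Set.Ici 0))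
    (hf : ∀ t s : ℝ, 0 ≤ t → 0 ≤ s → ∀ x₁ ∈ E, ∀ y₁ ∈ E,
      |f t s - f x₁ y₁| ≤
        M * |t / (1 + t) - x₁ / (1 + x₁)| ^ α₁ * |s / (1 + s) - y₁ / (1 + y₁)| ^ α₂)
    (x y : ℝ) (hx : 0 ≤ x) (hy : 0 ≤ y) :
    |bbh2 p₁ p₂ q₁ q₂ n₁ n₂ f x y - p₁ * q₁ * p₂ * q₂ * f x y| ≤
      M * (((1 / (p₁ * q₁)) *
              bbh p₁ q₁ n₁ (fun t => (t / (1 + t) - x / (1 + x)) ^ 2) x) ^ (α₁ / 2) *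
            ((1 / (p₂ * q₂)) *
              bbh p₂ q₂ n₂ (fun s => (s / (1 + s) - y / (1 + y)) ^ 2) y) ^ (α₂ / 2) +
          ((1 / (p₁ * q₁)) *
              bbh p₁ q₁ n₁ (fun t => (t / (1 + t) - x / (1 + x)) ^ 2) x) ^ (α₁ / 2) *
            Metric.infDist y E ^ α₂ +
          ((1 / (p₂ * q₂)) *
              bbh p₂ q₂ n₂ (fun s => (s / (1 + s) - y / (1 + y)) ^ 2) y) ^ (α₂ / 2) *
            Metric.infDist x E ^ α₁ +
          2 * Metric.infDist x E ^ α₁ * Metric.infDist y E ^ α₂) := by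
  have hp₁0 : 0 < p₁ := hq₁.trans hqp₁
  have hp₂0 : 0 < p₂ := hq₂.trans hqp₂
  obtain ⟨x₀, hx₀E, hx₀d⟩ := hEcl.exists_infDist_eq_dist hEne x
  obtain ⟨y₀, hy₀E, hy₀d⟩ := hEcl.exists_infDist_eq_dist hEne y
  have hx₀0 : 0 ≤ x₀ := hE hx₀E
  have hy₀0 : 0 ≤ y₀ := hE hy₀E
  set dx := Metric.infDist x E with hdxdef
  set dy := Metric.infDist y E with hdydef
  have hdx0 : 0 ≤ dx := Metric.infDist_nonneg
  have hdy0 : 0 ≤ dy := Metric.infDist_nonneg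
  have hdx'0 : 0 ≤ dx ^ α₁ := Real.rpow_nonneg hdx0 _
  have hdy'0 : 0 ≤ dy ^ α₂ := Real.rpow_nonneg hdy0 _
  set G₁ := (1 / (p₁ * q₁)) *
      bbh p₁ q₁ n₁ (fun t => (t / (1 + t) - x / (1 + x)) ^ 2) x with hG₁def
  set G₂ := (1 / (p₂ * q₂)) *
      bbh p₂ q₂ n₂ (fun s => (s / (1 + s) - y / (1 + y)) ^ 2) y with hG₂def
  -- weights
  have hb₁ : ∀ k ∈ Finset.range (n₁ + 1), 0 ≤ PQAux.bbhWeight p₁ q₁ n₁ x k :=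
    fun k _ => PQAux.bbhWeight_nonneg hq₁ hqp₁ hx n₁ k
  have hb₂ : ∀ k ∈ Finset.range (n₂ + 1), 0 ≤ PQAux.bbhWeight p₂ q₂ n₂ y k :=
    fun k _ => PQAux.bbhWeight_nonneg hq₂ hqp₂ hy n₂ k
  have hs₁ : ∑ k ∈ Finset.range (n₁ + 1), PQAux.bbhWeight p₁ q₁ n₁ x k = 1 :=
    PQAux.sum_bbhWeight hq₁ hqp₁ hx n₁
  have hs₂ : ∑ k ∈ Finset.range (n₂ + 1), PQAux.bbhWeight p₂ q₂ n₂ y k = 1 :=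
    PQAux.sum_bbhWeight hq₂ hqp₂ hy n₂
  -- G as weighted second moment
  have hG₁sum : G₁ = ∑ k ∈ Finset.range (n₁ + 1), PQAux.bbhWeight p₁ q₁ n₁ x k *
      (pqNode p₁ q₁ n₁ k / (1 + pqNode p₁ q₁ n₁ k) - x / (1 + x)) ^ 2 := by
    rw [hG₁def, PQAux.bbh_eq p₁ q₁ n₁ (fun t => (t / (1 + t) - x / (1 + x)) ^ 2) x,
      ← mul_assoc, one_div_mul_cancel (mul_pos hp₁0 hq₁).ne', one_mul]
    exact Finset.sum_congr rfl fun k _ => mul_comm _ _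
  have hG₂sum : G₂ = ∑ k ∈ Finset.range (n₂ + 1), PQAux.bbhWeight p₂ q₂ n₂ y k *
      (pqNode p₂ q₂ n₂ k / (1 + pqNode p₂ q₂ n₂ k) - y / (1 + y)) ^ 2 := by
    rw [hG₂def, PQAux.bbh_eq p₂ q₂ n₂ (fun s => (s / (1 + s) - y / (1 + y)) ^ 2) y,
      ← mul_assoc, one_div_mul_cancel (mul_pos hp₂0 hq₂).ne', one_mul]
    exact Finset.sum_congr rfl fun k _ => mul_comm _ _
  have hG₁0 : 0 ≤ G₁ := by
    rw [hG₁sum]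
    exact Finset.sum_nonneg fun k hk => mul_nonneg (hb₁ k hk) (sq_nonneg _)
  have hG₂0 : 0 ≤ G₂ := by
    rw [hG₂sum]
    exact Finset.sum_nonneg fun k hk => mul_nonneg (hb₂ k hk) (sq_nonneg _)
  have hE₁0 : 0 ≤ G₁ ^ (α₁ / 2) := Real.rpow_nonneg hG₁0 _
  have hE₂0 : 0 ≤ G₂ ^ (α₂ / 2) := Real.rpow_nonneg hG₂0 _
  -- Jensen
  have hJ₁ : (∑ k ∈ Finset.range (n₁ + 1), PQAux.bbhWeight p₁ q₁ n₁ x k *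
      |pqNode p₁ q₁ n₁ k / (1 + pqNode p₁ q₁ n₁ k) - x / (1 + x)| ^ α₁) ≤ G₁ ^ (α₁ / 2) := by
    have h := PQAux.jensen_rpow (Finset.range (n₁ + 1)) (PQAux.bbhWeight p₁ q₁ n₁ x)
      (fun k => pqNode p₁ q₁ n₁ k / (1 + pqNode p₁ q₁ n₁ k) - x / (1 + x)) α₁ hα₁0 hα₁1 hb₁ hs₁
    rw [hG₁sum]
    exact h
  have hJ₂ : (∑ k ∈ Finset.range (n₂ + 1), PQAux.bbhWeight p₂ q₂ n₂ y k *
      |pqNode p₂ q₂ n₂ k / (1 + pqNode p₂ q₂ n₂ k) - y / (1 + y)| ^ α₂) ≤ G₂ ^ (α₂ / 2) := by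
    have h := PQAux.jensen_rpow (Finset.range (n₂ + 1)) (PQAux.bbhWeight p₂ q₂ n₂ y)
      (fun k => pqNode p₂ q₂ n₂ k / (1 + pqNode p₂ q₂ n₂ k) - y / (1 + y)) α₂ hα₂0 hα₂1 hb₂ hs₂
    rw [hG₂sum]
    exact h
  set S₁ := ∑ k ∈ Finset.range (n₁ + 1), PQAux.bbhWeight p₁ q₁ n₁ x k *
      |pqNode p₁ q₁ n₁ k / (1 + pqNode p₁ q₁ n₁ k) - x / (1 + x)| ^ α₁ with hS₁def
  set S₂ := ∑ k ∈ Finset.range (n₂ + 1), PQAux.bbhWeight p₂ q₂ n₂ y k *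
      |pqNode p₂ q₂ n₂ k / (1 + pqNode p₂ q₂ n₂ k) - y / (1 + y)| ^ α₂ with hS₂def
  have hS₁0 : 0 ≤ S₁ := Finset.sum_nonneg fun k hk =>
    mul_nonneg (hb₁ k hk) (Real.rpow_nonneg (abs_nonneg _) _)
  have hS₂0 : 0 ≤ S₂ := Finset.sum_nonneg fun k hk =>
    mul_nonneg (hb₂ k hk) (Real.rpow_nonneg (abs_nonneg _) _)
  -- distance bounds in the transformed variable
  have hxx₀ : |x / (1 + x) - x₀ / (1 + x₀)| ≤ dx := by
    calc |x / (1 + x) - x₀ / (1 + x₀)| ≤ |x - x₀| := PQAux.ratio_lip x x₀ hx hx₀0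
      _ = dist x x₀ := (Real.dist_eq x x₀).symm
      _ = dx := hx₀d.symm
  have hyy₀ : |y / (1 + y) - y₀ / (1 + y₀)| ≤ dy := by
    calc |y / (1 + y) - y₀ / (1 + y₀)| ≤ |y - y₀| := PQAux.ratio_lip y y₀ hy hy₀0
      _ = dist y y₀ := (Real.dist_eq y y₀).symm
      _ = dy := hy₀d.symm
  have hxx₀' : |x / (1 + x) - x₀ / (1 + x₀)| ^ α₁ ≤ dx ^ α₁ :=
    Real.rpow_le_rpow (abs_nonneg _) hxx₀ hα₁0.le
  have hyy₀' : |y / (1 + y) - y₀ / (1 + y₀)| ^ α₂ ≤ dy ^ α₂ :=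
    Real.rpow_le_rpow (abs_nonneg _) hyy₀ hα₂0.le
  have hptA : ∀ t : ℝ, 0 ≤ t → |t / (1 + t) - x₀ / (1 + x₀)| ^ α₁ ≤
      |t / (1 + t) - x / (1 + x)| ^ α₁ + dx ^ α₁ := by
    intro t ht
    have h1 : |t / (1 + t) - x₀ / (1 + x₀)| ≤ |t / (1 + t) - x / (1 + x)| + dx := by
      calc |t / (1 + t) - x₀ / (1 + x₀)|
          ≤ |t / (1 + t) - x / (1 + x)| + |x / (1 + x) - x₀ / (1 + x₀)| := abs_sub_le _ _ _
        _ ≤ |t / (1 + t) - x / (1 + x)| + dx := by linarith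
    calc |t / (1 + t) - x₀ / (1 + x₀)| ^ α₁
        ≤ (|t / (1 + t) - x / (1 + x)| + dx) ^ α₁ :=
          Real.rpow_le_rpow (abs_nonneg _) h1 hα₁0.le
      _ ≤ |t / (1 + t) - x / (1 + x)| ^ α₁ + dx ^ α₁ :=
          PQAux.rpow_add_le _ _ _ (abs_nonneg _) hdx0 hα₁0.le hα₁1
  have hptB : ∀ s : ℝ, 0 ≤ s → |s / (1 + s) - y₀ / (1 + y₀)| ^ α₂ ≤
      |s / (1 + s) - y / (1 + y)| ^ α₂ + dy ^ α₂ := by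
    intro s hs
    have h1 : |s / (1 + s) - y₀ / (1 + y₀)| ≤ |s / (1 + s) - y / (1 + y)| + dy := by
      calc |s / (1 + s) - y₀ / (1 + y₀)|
          ≤ |s / (1 + s) - y / (1 + y)| + |y / (1 + y) - y₀ / (1 + y₀)| := abs_sub_le _ _ _
        _ ≤ |s / (1 + s) - y / (1 + y)| + dy := by linarith
    calc |s / (1 + s) - y₀ / (1 + y₀)| ^ α₂
        ≤ (|s / (1 + s) - y / (1 + y)| + dy) ^ α₂ :=
          Real.rpow_le_rpow (abs_nonneg _) h1 hα₂0.le
      _ ≤ |s / (1 + s) - y / (1 + y)| ^ α₂ + dy ^ α₂ :=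
          PQAux.rpow_add_le _ _ _ (abs_nonneg _) hdy0 hα₂0.le hα₂1
  -- pointwise estimate
  have hpt : ∀ t s : ℝ, 0 ≤ t → 0 ≤ s → |f t s - f x y| ≤
      M * (|t / (1 + t) - x / (1 + x)| ^ α₁ * |s / (1 + s) - y / (1 + y)| ^ α₂
        + |t / (1 + t) - x / (1 + x)| ^ α₁ * dy ^ α₂
        + dx ^ α₁ * |s / (1 + s) - y / (1 + y)| ^ α₂
        + 2 * dx ^ α₁ * dy ^ α₂) := by
    intro t s ht hs
    have h1 := hf t s ht hs x₀ hx₀E y₀ hy₀E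
    have h2 := hf x y hx hy x₀ hx₀E y₀ hy₀E
    have htri : |f t s - f x y| ≤ |f t s - f x₀ y₀| + |f x y - f x₀ y₀| := by
      calc |f t s - f x y| ≤ |f t s - f x₀ y₀| + |f x₀ y₀ - f x y| := abs_sub_le _ _ _
        _ = |f t s - f x₀ y₀| + |f x y - f x₀ y₀| := by rw [abs_sub_comm (f x₀ y₀)]
    have hA1 := hptA t ht
    have hB1 := hptB s hs
    have hAnn : (0:ℝ) ≤ |t / (1 + t) - x₀ / (1 + x₀)| ^ α₁ := Real.rpow_nonneg (abs_nonneg _) _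
    have hBnn : (0:ℝ) ≤ |s / (1 + s) - y₀ / (1 + y₀)| ^ α₂ := Real.rpow_nonneg (abs_nonneg _) _
    have hb1 : |f t s - f x₀ y₀| ≤
        M * (|t / (1 + t) - x / (1 + x)| ^ α₁ + dx ^ α₁) *
          (|s / (1 + s) - y / (1 + y)| ^ α₂ + dy ^ α₂) := by
      refine h1.trans ?_
      have step1 : M * |t / (1 + t) - x₀ / (1 + x₀)| ^ α₁ ≤
          M * (|t / (1 + t) - x / (1 + x)| ^ α₁ + dx ^ α₁) :=
        mul_le_mul_of_nonneg_left hA1 hM.le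
      exact mul_le_mul step1 hB1 hBnn
        (mul_nonneg hM.le (by positivity))
    have hb2 : |f x y - f x₀ y₀| ≤ M * dx ^ α₁ * dy ^ α₂ := by
      refine h2.trans ?_
      exact mul_le_mul (mul_le_mul_of_nonneg_left hxx₀' hM.le) hyy₀'
        (Real.rpow_nonneg (abs_nonneg _) _) (mul_nonneg hM.le hdx'0)
    linarith [htri, hb1, hb2]
  -- difference as weighted sum
  have hinner1 : ∀ k₁, ∑ k₂ ∈ Finset.range (n₂ + 1),
      f x y * (PQAux.bbhWeight p₁ q₁ n₁ x k₁ * PQAux.bbhWeight p₂ q₂ n₂ y k₂)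
        = f x y * PQAux.bbhWeight p₁ q₁ n₁ x k₁ := by
    intro k₁
    rw [← Finset.mul_sum, ← Finset.mul_sum, hs₂, mul_one]
  have hsplit : (∑ k₁ ∈ Finset.range (n₁ + 1), ∑ k₂ ∈ Finset.range (n₂ + 1),
      (f (pqNode p₁ q₁ n₁ k₁) (pqNode p₂ q₂ n₂ k₂) - f x y) *
        (PQAux.bbhWeight p₁ q₁ n₁ x k₁ * PQAux.bbhWeight p₂ q₂ n₂ y k₂))
      = (∑ k₁ ∈ Finset.range (n₁ + 1), ∑ k₂ ∈ Finset.range (n₂ + 1),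
          f (pqNode p₁ q₁ n₁ k₁) (pqNode p₂ q₂ n₂ k₂) *
            (PQAux.bbhWeight p₁ q₁ n₁ x k₁ * PQAux.bbhWeight p₂ q₂ n₂ y k₂)) - f x y := by
    simp only [sub_mul, Finset.sum_sub_distrib]
    rw [Finset.sum_congr rfl fun k₁ _ => hinner1 k₁, ← Finset.mul_sum, hs₁, mul_one]
  have hdiff : bbh2 p₁ p₂ q₁ q₂ n₁ n₂ f x y - p₁ * q₁ * p₂ * q₂ * f x y
      = (p₁ * q₁ * (p₂ * q₂)) * ∑ k₁ ∈ Finset.range (n₁ + 1), ∑ k₂ ∈ Finset.range (n₂ + 1),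
          (f (pqNode p₁ q₁ n₁ k₁) (pqNode p₂ q₂ n₂ k₂) - f x y) *
            (PQAux.bbhWeight p₁ q₁ n₁ x k₁ * PQAux.bbhWeight p₂ q₂ n₂ y k₂) := by
    rw [PQAux.bbh2_eq, hsplit]
    ring
  -- bounding the sum
  have habs : |∑ k₁ ∈ Finset.range (n₁ + 1), ∑ k₂ ∈ Finset.range (n₂ + 1),
      (f (pqNode p₁ q₁ n₁ k₁) (pqNode p₂ q₂ n₂ k₂) - f x y) *
        (PQAux.bbhWeight p₁ q₁ n₁ x k₁ * PQAux.bbhWeight p₂ q₂ n₂ y k₂)|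
      ≤ ∑ k₁ ∈ Finset.range (n₁ + 1), ∑ k₂ ∈ Finset.range (n₂ + 1),
          |f (pqNode p₁ q₁ n₁ k₁) (pqNode p₂ q₂ n₂ k₂) - f x y| *
            (PQAux.bbhWeight p₁ q₁ n₁ x k₁ * PQAux.bbhWeight p₂ q₂ n₂ y k₂) := by
    refine (Finset.abs_sum_le_sum_abs _ _).trans ?_
    refine Finset.sum_le_sum fun k₁ hk₁ => ?_
    refine (Finset.abs_sum_le_sum_abs _ _).trans ?_
    refine Finset.sum_le_sum fun k₂ hk₂ => ?_
    rw [abs_mul, abs_of_nonneg (mul_nonneg (hb₁ k₁ hk₁) (hb₂ k₂ hk₂))]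
  have hbound : (∑ k₁ ∈ Finset.range (n₁ + 1), ∑ k₂ ∈ Finset.range (n₂ + 1),
      |f (pqNode p₁ q₁ n₁ k₁) (pqNode p₂ q₂ n₂ k₂) - f x y| *
        (PQAux.bbhWeight p₁ q₁ n₁ x k₁ * PQAux.bbhWeight p₂ q₂ n₂ y k₂))
      ≤ ∑ k₁ ∈ Finset.range (n₁ + 1), ∑ k₂ ∈ Finset.range (n₂ + 1),
          (M * (|pqNode p₁ q₁ n₁ k₁ / (1 + pqNode p₁ q₁ n₁ k₁) - x / (1 + x)| ^ α₁ *
              |pqNode p₂ q₂ n₂ k₂ / (1 + pqNode p₂ q₂ n₂ k₂) - y / (1 + y)| ^ α₂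
            + |pqNode p₁ q₁ n₁ k₁ / (1 + pqNode p₁ q₁ n₁ k₁) - x / (1 + x)| ^ α₁ * dy ^ α₂
            + dx ^ α₁ * |pqNode p₂ q₂ n₂ k₂ / (1 + pqNode p₂ q₂ n₂ k₂) - y / (1 + y)| ^ α₂
            + 2 * dx ^ α₁ * dy ^ α₂)) *
            (PQAux.bbhWeight p₁ q₁ n₁ x k₁ * PQAux.bbhWeight p₂ q₂ n₂ y k₂) := by
    refine Finset.sum_le_sum fun k₁ hk₁ => Finset.sum_le_sum fun k₂ hk₂ => ?_
    exact mul_le_mul_of_nonneg_right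
      (hpt _ _ (PQAux.pqNode_nonneg hq₁ hqp₁ n₁ k₁) (PQAux.pqNode_nonneg hq₂ hqp₂ n₂ k₂))
      (mul_nonneg (hb₁ k₁ hk₁) (hb₂ k₂ hk₂))
  have hcollapse : (∑ k₁ ∈ Finset.range (n₁ + 1), ∑ k₂ ∈ Finset.range (n₂ + 1),
      (M * (|pqNode p₁ q₁ n₁ k₁ / (1 + pqNode p₁ q₁ n₁ k₁) - x / (1 + x)| ^ α₁ *
          |pqNode p₂ q₂ n₂ k₂ / (1 + pqNode p₂ q₂ n₂ k₂) - y / (1 + y)| ^ α₂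
        + |pqNode p₁ q₁ n₁ k₁ / (1 + pqNode p₁ q₁ n₁ k₁) - x / (1 + x)| ^ α₁ * dy ^ α₂
        + dx ^ α₁ * |pqNode p₂ q₂ n₂ k₂ / (1 + pqNode p₂ q₂ n₂ k₂) - y / (1 + y)| ^ α₂
        + 2 * dx ^ α₁ * dy ^ α₂)) *
        (PQAux.bbhWeight p₁ q₁ n₁ x k₁ * PQAux.bbhWeight p₂ q₂ n₂ y k₂))
      = M * (S₁ * S₂ + S₁ * dy ^ α₂ + dx ^ α₁ * S₂ + 2 * dx ^ α₁ * dy ^ α₂) := by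
    have hinner : ∀ k₁, (∑ k₂ ∈ Finset.range (n₂ + 1),
        (M * (|pqNode p₁ q₁ n₁ k₁ / (1 + pqNode p₁ q₁ n₁ k₁) - x / (1 + x)| ^ α₁ *
            |pqNode p₂ q₂ n₂ k₂ / (1 + pqNode p₂ q₂ n₂ k₂) - y / (1 + y)| ^ α₂
          + |pqNode p₁ q₁ n₁ k₁ / (1 + pqNode p₁ q₁ n₁ k₁) - x / (1 + x)| ^ α₁ * dy ^ α₂
          + dx ^ α₁ * |pqNode p₂ q₂ n₂ k₂ / (1 + pqNode p₂ q₂ n₂ k₂) - y / (1 + y)| ^ α₂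
          + 2 * dx ^ α₁ * dy ^ α₂)) *
          (PQAux.bbhWeight p₁ q₁ n₁ x k₁ * PQAux.bbhWeight p₂ q₂ n₂ y k₂))
        = M * (S₂ + dy ^ α₂) *
            (PQAux.bbhWeight p₁ q₁ n₁ x k₁ *
              |pqNode p₁ q₁ n₁ k₁ / (1 + pqNode p₁ q₁ n₁ k₁) - x / (1 + x)| ^ α₁)
          + M * (dx ^ α₁ * S₂ + 2 * dx ^ α₁ * dy ^ α₂) * PQAux.bbhWeight p₁ q₁ n₁ x k₁ := by
      intro k₁
      rw [Finset.sum_congr rfl (fun k₂ _ => show _ =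
          (M * PQAux.bbhWeight p₁ q₁ n₁ x k₁ *
              (|pqNode p₁ q₁ n₁ k₁ / (1 + pqNode p₁ q₁ n₁ k₁) - x / (1 + x)| ^ α₁ + dx ^ α₁)) *
            (PQAux.bbhWeight p₂ q₂ n₂ y k₂ *
              |pqNode p₂ q₂ n₂ k₂ / (1 + pqNode p₂ q₂ n₂ k₂) - y / (1 + y)| ^ α₂)
          + (M * PQAux.bbhWeight p₁ q₁ n₁ x k₁ *
              (|pqNode p₁ q₁ n₁ k₁ / (1 + pqNode p₁ q₁ n₁ k₁) - x / (1 + x)| ^ α₁ * dy ^ α₂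
                + 2 * dx ^ α₁ * dy ^ α₂)) * PQAux.bbhWeight p₂ q₂ n₂ y k₂ from by ring)]
      rw [Finset.sum_add_distrib, ← Finset.mul_sum, ← Finset.mul_sum, ← hS₂def, hs₂]
      ring
    rw [Finset.sum_congr rfl fun k₁ _ => hinner k₁]
    rw [Finset.sum_add_distrib, ← Finset.mul_sum, ← Finset.mul_sum, ← hS₁def, hs₁]
    ring
  -- put it together
  have hP0 : 0 < p₁ * q₁ * (p₂ * q₂) := by positivity
  have hP1 : p₁ * q₁ * (p₂ * q₂) ≤ 1 := by
    have a1 : p₁ * q₁ ≤ 1 * 1 := mul_le_mul hp₁ (hqp₁.le.trans hp₁) hq₁.le zero_le_one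
    have a2 : p₂ * q₂ ≤ 1 * 1 := mul_le_mul hp₂ (hqp₂.le.trans hp₂) hq₂.le zero_le_one
    rw [one_mul] at a1 a2
    have a3 : p₁ * q₁ * (p₂ * q₂) ≤ 1 * 1 :=
      mul_le_mul a1 a2 (mul_pos hp₂0 hq₂).le zero_le_one
    linarith
  have hQ0 : 0 ≤ M * (S₁ * S₂ + S₁ * dy ^ α₂ + dx ^ α₁ * S₂ + 2 * dx ^ α₁ * dy ^ α₂) := by
    apply mul_nonneg hM.le
    have h1 := mul_nonneg hS₁0 hS₂0
    have h2 := mul_nonneg hS₁0 hdy'0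
    have h3 := mul_nonneg hdx'0 hS₂0
    have h4 := mul_nonneg hdx'0 hdy'0
    linarith
  have hQQ' : M * (S₁ * S₂ + S₁ * dy ^ α₂ + dx ^ α₁ * S₂ + 2 * dx ^ α₁ * dy ^ α₂)
      ≤ M * (G₁ ^ (α₁ / 2) * G₂ ^ (α₂ / 2) + G₁ ^ (α₁ / 2) * dy ^ α₂ +
          G₂ ^ (α₂ / 2) * dx ^ α₁ + 2 * dx ^ α₁ * dy ^ α₂) := by
    have t1 : S₁ * S₂ ≤ G₁ ^ (α₁ / 2) * G₂ ^ (α₂ / 2) := mul_le_mul hJ₁ hJ₂ hS₂0 hE₁0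
    have t2 : S₁ * dy ^ α₂ ≤ G₁ ^ (α₁ / 2) * dy ^ α₂ := mul_le_mul_of_nonneg_right hJ₁ hdy'0
    have t3 : dx ^ α₁ * S₂ ≤ G₂ ^ (α₂ / 2) * dx ^ α₁ := by
      rw [mul_comm]
      exact mul_le_mul_of_nonneg_right hJ₂ hdx'0
    apply mul_le_mul_of_nonneg_left _ hM.le
    linarith
  calc |bbh2 p₁ p₂ q₁ q₂ n₁ n₂ f x y - p₁ * q₁ * p₂ * q₂ * f x y|
      = (p₁ * q₁ * (p₂ * q₂)) * |∑ k₁ ∈ Finset.range (n₁ + 1), ∑ k₂ ∈ Finset.range (n₂ + 1),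
          (f (pqNode p₁ q₁ n₁ k₁) (pqNode p₂ q₂ n₂ k₂) - f x y) *
            (PQAux.bbhWeight p₁ q₁ n₁ x k₁ * PQAux.bbhWeight p₂ q₂ n₂ y k₂)| := by
        rw [hdiff, abs_mul, abs_of_pos hP0]
    _ ≤ (p₁ * q₁ * (p₂ * q₂)) *
          (M * (S₁ * S₂ + S₁ * dy ^ α₂ + dx ^ α₁ * S₂ + 2 * dx ^ α₁ * dy ^ α₂)) := by
        apply mul_le_mul_of_nonneg_left _ hP0.le
        calc |∑ k₁ ∈ Finset.range (n₁ + 1), ∑ k₂ ∈ Finset.range (n₂ + 1),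
            (f (pqNode p₁ q₁ n₁ k₁) (pqNode p₂ q₂ n₂ k₂) - f x y) *
              (PQAux.bbhWeight p₁ q₁ n₁ x k₁ * PQAux.bbhWeight p₂ q₂ n₂ y k₂)|
            ≤ _ := habs
          _ ≤ _ := hbound
          _ = _ := hcollapse
    _ ≤ M * (S₁ * S₂ + S₁ * dy ^ α₂ + dx ^ α₁ * S₂ + 2 * dx ^ α₁ * dy ^ α₂) :=
        mul_le_of_le_one_left hQ0 hP1
    _ ≤ M * (G₁ ^ (α₁ / 2) * G₂ ^ (α₂ / 2) + G₁ ^ (α₁ / 2) * dy ^ α₂ +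
          G₂ ^ (α₂ / 2) * dx ^ α₁ + 2 * dx ^ α₁ * dy ^ α₂) := hQQ'
end
end
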